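/- If x̌(1) ≥ x̌(2) ≥ ... ≥ x̌(k) is an ordered sequence of Boolean vectors such that x̌(l) minimizes u(l,·) over {0,1}^V for each l, then the label vector m̂ with coordinates m̂ᵢ = m(0) + Σ_{l=1}^{k} (m(l) - m(l-1)) · x̌ᵢ(l) minimizes U₁(m) over M^V. -/

import Mathlib

open Finset

/-- A Boolean vector has coordinates 0 or 1. -/
def IsBool {V : Type} (b : V → ℝ) : Prop := ∀ i, b i = 0 ∨ b i = 1

/-- The one-level energy u(l,b) with data z. -/
noncomputable def uEn {V : Type} [Fintype V] (lam : V → ℝ) (beta : V → V → ℝ)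
    (z : V → ℝ) (b : V → ℝ) : ℝ :=
  ∑ i, lam i * |z i - b i| + ∑ i, ∑ j, beta i j * |b i - b j|

/-- b minimizes u(·) over Boolean vectors. -/
def Minimizes {V : Type} [Fintype V] (lam : V → ℝ) (beta : V → V → ℝ)
    (z : V → ℝ) (b : V → ℝ) : Prop :=
  IsBool b ∧ ∀ b' : V → ℝ, IsBool b' → uEn lam beta z b ≤ uEn lam beta z b'

/-- The exponential energy on real-valued label vectors. -/
noncomputable def U1R {V : Type} [Fintype V] (f : V → ℤ) (lam : V → ℝ)
    (beta : V → V → ℝ) (mm : V → ℝ) : ℝ :=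
  ∑ i, lam i * |((f i : ℝ) - mm i)| + ∑ i, ∑ j, beta i j * |mm i - mm j|

/-- The averaged layer data z_i(l) of the feature vector f. -/
noncomputable def zData {V : Type} (f : V → ℤ) (m : ℕ → ℤ) (l : ℕ) (i : V) : ℝ :=
  (1 / ((m l : ℝ) - (m (l - 1) : ℝ))) *
    ∑ τ ∈ Finset.Icc (m (l - 1) + 1) (m l), (if τ ≤ f i then (1 : ℝ) else 0)


noncomputable def chi (a τ : ℤ) : ℝ := if τ ≤ a then 1 else 0

lemma chi_bool (a τ : ℤ) : chi a τ = 0 ∨ chi a τ = 1 := by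
  unfold chi; split_ifs <;> simp

lemma chi_sum (lo hi c : ℤ) (h1 : lo ≤ c) (h2 : c ≤ hi) :
    ∑ τ ∈ Finset.Ioc lo hi, chi c τ = (c : ℝ) - lo := by
  unfold chi
  rw [Finset.sum_boole]
  have : (Finset.Ioc lo hi).filter (fun τ => τ ≤ c) = Finset.Ioc lo c := by
    ext τ; simp only [Finset.mem_filter, Finset.mem_Ioc]; omega
  rw [this, Int.card_Ioc]
  have h3 : (0:ℤ) ≤ c - lo := by omega
  have h4 : (((c - lo).toNat : ℤ) : ℝ) = ((c : ℝ) - lo) := by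
    rw [Int.toNat_of_nonneg h3]; push_cast; ring
  rw [Int.cast_natCast] at h4
  exact h4

lemma abs_chi_sub (a b τ : ℤ) :
    |chi a τ - chi b τ| = chi (max a b) τ - chi (min a b) τ := by
  unfold chi
  rcases le_or_gt τ a with h1 | h1 <;> rcases le_or_gt τ b with h2 | h2
  · rw [if_pos h1, if_pos h2, if_pos (le_max_of_le_left h1), if_pos (le_min h1 h2)]; norm_num
  · rw [if_pos h1, if_neg (not_le.2 h2), if_pos (le_max_of_le_left h1),
      if_neg (by rw [not_le]; exact min_lt_iff.2 (Or.inr h2))]; norm_num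
  · rw [if_neg (not_le.2 h1), if_pos h2, if_pos (le_max_of_le_right h2),
      if_neg (by rw [not_le]; exact min_lt_iff.2 (Or.inl h1))]
    rw [abs_of_nonpos] <;> norm_num
  · rw [if_neg (not_le.2 h1), if_neg (not_le.2 h2),
      if_neg (by rw [not_le]; exact max_lt_iff.2 ⟨h1, h2⟩),
      if_neg (by rw [not_le]; exact min_lt_iff.2 (Or.inl h1))]; norm_num

lemma abs_eq_sum (lo hi a b : ℤ) (ha : lo ≤ a) (ha' : a ≤ hi) (hb : lo ≤ b) (hb' : b ≤ hi) :
    |(a:ℝ) - b| = ∑ τ ∈ Finset.Ioc lo hi, |chi a τ - chi b τ| := by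
  have h1 : ∑ τ ∈ Finset.Ioc lo hi, |chi a τ - chi b τ|
      = ∑ τ ∈ Finset.Ioc lo hi, (chi (max a b) τ - chi (min a b) τ) :=
    Finset.sum_congr rfl (fun τ _ => abs_chi_sub a b τ)
  rw [h1, Finset.sum_sub_distrib, chi_sum lo hi _ (le_max_of_le_left ha) (max_le ha' hb'),
    chi_sum lo hi _ (le_min ha hb) (min_le_of_left_le ha')]
  rcases le_total a b with h | h
  · rw [abs_of_nonpos (by push_cast; simp [h] : (a:ℝ) - b ≤ 0)]
    rw [max_eq_right h, min_eq_left h]; push_cast; ring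
  · rw [abs_of_nonneg (by push_cast; simp [h] : (0:ℝ) ≤ (a:ℝ) - b)]
    rw [max_eq_left h, min_eq_right h]; push_cast; ring

lemma m_mono (m : ℕ → ℤ) (k : ℕ) (h : ∀ l, l < k → m l < m (l + 1)) :
    ∀ a b : ℕ, a ≤ b → b ≤ k → m a ≤ m b := by
  intro a b
  induction b with
  | zero => intro hab _; interval_cases a; exact le_refl _
  | succ n ih =>
    intro hab hbk
    rcases Nat.lt_succ_iff_lt_or_eq.mp (Nat.lt_succ_of_le hab) with h' | h'
    · exact le_trans (ih (by omega) (by omega)) (le_of_lt (h n (by omega)))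
    · rw [h']

lemma m_smono (m : ℕ → ℤ) (k : ℕ) (h : ∀ l, l < k → m l < m (l + 1)) :
    ∀ a b : ℕ, a < b → b ≤ k → m a < m b := by
  intro a b hab hbk
  have hb : b - 1 + 1 = b := by omega
  have h1 : m a ≤ m (b - 1) := m_mono m k h a (b-1) (by omega) (by omega)
  have h2 : m (b-1) < m (b-1+1) := h (b-1) (by omega)
  rw [hb] at h2; omega

lemma sum_Ioc_consec_int (g : ℤ → ℝ) {a b c : ℤ} (h1 : a ≤ b) (h2 : b ≤ c) :
    ∑ τ ∈ Finset.Ioc a b, g τ + ∑ τ ∈ Finset.Ioc b c, g τ = ∑ τ ∈ Finset.Ioc a c, g τ := by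
  have hd : Disjoint (Finset.Ioc a b) (Finset.Ioc b c) := by
    rw [Finset.disjoint_left]
    intro t ht ht'
    simp only [Finset.mem_Ioc] at ht ht'
    omega
  rw [← Finset.sum_union hd, Finset.Ioc_union_Ioc_eq_Ioc h1 h2]

lemma block_split (m : ℕ → ℤ) (k : ℕ) (h : ∀ l, l < k → m l < m (l + 1)) (g : ℤ → ℝ) :
    ∑ l ∈ Finset.Icc 1 k, ∑ τ ∈ Finset.Ioc (m (l - 1)) (m l), g τ
      = ∑ τ ∈ Finset.Ioc (m 0) (m k), g τ := by
  induction k with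
  | zero => simp
  | succ n ih =>
    rw [Finset.sum_Icc_succ_top (by omega : 1 ≤ n + 1),
      ih (fun l hl => h l (by omega))]
    simp only [Nat.add_sub_cancel]
    exact sum_Ioc_consec_int g
      (m_mono m (n+1) h 0 n (by omega) (by omega))
      (le_of_lt (h n (by omega)))

lemma telescope (m : ℕ → ℤ) (j : ℕ) :
    ∑ l ∈ Finset.Icc 1 j, ((m l : ℝ) - (m (l - 1) : ℝ)) = (m j : ℝ) - m 0 := by
  induction j with
  | zero => simp
  | succ n ih =>
    rw [Finset.sum_Icc_succ_top (by omega : 1 ≤ n + 1), ih]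
    simp only [Nat.add_sub_cancel]; ring

lemma Icc_succ_Ioc (a b : ℤ) : Finset.Icc (a + 1) b = Finset.Ioc a b := by
  ext τ; simp only [Finset.mem_Icc, Finset.mem_Ioc]; omega

lemma zData_eq {V : Type} (f : V → ℤ) (m : ℕ → ℤ) (l : ℕ) (i : V)
    (hl : m (l - 1) < m l) :
    ((m l : ℝ) - (m (l - 1) : ℝ)) * zData f m l i
      = ∑ τ ∈ Finset.Ioc (m (l - 1)) (m l), chi (f i) τ := by
  unfold zData chi
  rw [Icc_succ_Ioc]
  have hΔ : ((m l : ℝ) - (m (l - 1) : ℝ)) ≠ 0 := by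
    have : (m (l-1) : ℝ) < m l := by exact_mod_cast hl
    linarith
  field_simp

lemma zData_mem {V : Type} (f : V → ℤ) (m : ℕ → ℤ) (l : ℕ) (i : V)
    (hl : m (l - 1) < m l) :
    0 ≤ zData f m l i ∧ zData f m l i ≤ 1 := by
  have hΔ : (0:ℝ) < ((m l : ℝ) - (m (l - 1) : ℝ)) := by
    have : (m (l-1) : ℝ) < m l := by exact_mod_cast hl
    linarith
  have hS0 : 0 ≤ ∑ τ ∈ Finset.Icc (m (l - 1) + 1) (m l), (if τ ≤ f i then (1:ℝ) else 0) := by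
    apply Finset.sum_nonneg; intro τ _; split_ifs <;> norm_num
  have hS1 : ∑ τ ∈ Finset.Icc (m (l - 1) + 1) (m l), (if τ ≤ f i then (1:ℝ) else 0)
      ≤ ∑ τ ∈ Finset.Icc (m (l - 1) + 1) (m l), (1:ℝ) := by
    apply Finset.sum_le_sum; intro τ _; split_ifs <;> norm_num
  rw [Finset.sum_const, nsmul_eq_mul, mul_one] at hS1
  have hcard : ((Finset.Icc (m (l-1) + 1) (m l)).card : ℝ) = ((m l : ℝ) - (m (l - 1) : ℝ)) := by
    rw [Icc_succ_Ioc, Int.card_Ioc]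
    have h3 : (0:ℤ) ≤ m l - m (l-1) := by omega
    have h4 : (((m l - m (l-1)).toNat : ℤ) : ℝ) = ((m l : ℝ) - m (l-1)) := by
      rw [Int.toNat_of_nonneg h3]; push_cast; ring
    rw [Int.cast_natCast] at h4
    exact h4
  rw [hcard] at hS1
  unfold zData
  constructor
  · positivity
  · rw [one_div, inv_mul_le_iff₀ hΔ, mul_one]; exact hS1

lemma block_data {V : Type} (f : V → ℤ) (m : ℕ → ℤ) (l : ℕ) (i : V)
    (hl : m (l - 1) < m l) (b : ℝ) (hb : b = 0 ∨ b = 1) :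
    ∑ τ ∈ Finset.Ioc (m (l - 1)) (m l), |chi (f i) τ - b|
      = ((m l : ℝ) - (m (l - 1) : ℝ)) * |zData f m l i - b| := by
  have hΔ : (0:ℝ) < ((m l : ℝ) - (m (l - 1) : ℝ)) := by
    have : (m (l-1) : ℝ) < m l := by exact_mod_cast hl
    linarith
  have hz := zData_mem f m l i hl
  have hcard : ((Finset.Ioc (m (l-1)) (m l)).card : ℝ) = ((m l : ℝ) - (m (l - 1) : ℝ)) := by
    rw [Int.card_Ioc]
    have h3 : (0:ℤ) ≤ m l - m (l-1) := by omega
    have h4 : (((m l - m (l-1)).toNat : ℤ) : ℝ) = ((m l : ℝ) - m (l-1)) := by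
      rw [Int.toNat_of_nonneg h3]; push_cast; ring
    rw [Int.cast_natCast] at h4
    exact h4
  rcases hb with hb | hb <;> subst hb
  · have h1 : ∀ τ ∈ Finset.Ioc (m (l-1)) (m l), |chi (f i) τ - 0| = chi (f i) τ := by
      intro τ _; rcases chi_bool (f i) τ with h | h <;> rw [h] <;> norm_num
    rw [Finset.sum_congr rfl h1, ← zData_eq f m l i hl,
      abs_of_nonneg (by linarith [hz.1] : (0:ℝ) ≤ zData f m l i - 0)]
    ring
  · have h1 : ∀ τ ∈ Finset.Ioc (m (l-1)) (m l), |chi (f i) τ - 1| = 1 - chi (f i) τ := by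
      intro τ _; rcases chi_bool (f i) τ with h | h <;> rw [h] <;> norm_num
    rw [Finset.sum_congr rfl h1, Finset.sum_sub_distrib, ← zData_eq f m l i hl,
      Finset.sum_const, nsmul_eq_mul, mul_one, hcard,
      abs_of_nonpos (by linarith [hz.2] : zData f m l i - 1 ≤ 0)]
    ring

noncomputable def bvec {V : Type} (m : ℕ → ℤ) (mm : V → ℤ) (l : ℕ) : V → ℝ :=
  fun i => if m l ≤ mm i then 1 else 0

lemma bvec_bool' {V : Type} (m : ℕ → ℤ) (mm : V → ℤ) (l : ℕ) (i : V) :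
    bvec m mm l i = 0 ∨ bvec m mm l i = 1 := by
  unfold bvec; split_ifs <;> simp

lemma card_Ioc_real (a b : ℤ) (h : a ≤ b) : (((Finset.Ioc a b).card : ℕ) : ℝ) = (b:ℝ) - a := by
  rw [Int.card_Ioc]
  have h3 : (0:ℤ) ≤ b - a := by omega
  have h4 : (((b - a).toNat : ℤ) : ℝ) = ((b : ℝ) - a) := by
    rw [Int.toNat_of_nonneg h3]; push_cast; ring
  rw [Int.cast_natCast] at h4
  exact h4

lemma chi_eq_bvec {V : Type} (m : ℕ → ℤ) (k : ℕ) (hmono : ∀ l, l < k → m l < m (l + 1))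
    (mm : V → ℤ) (hM : ∀ i, ∃ j ≤ k, mm i = m j) (i : V) (l : ℕ)
    (hl1 : 1 ≤ l) (hl2 : l ≤ k) (τ : ℤ) (hτ : τ ∈ Finset.Ioc (m (l - 1)) (m l)) :
    chi (mm i) τ = bvec m mm l i := by
  rw [Finset.mem_Ioc] at hτ
  unfold chi bvec
  obtain ⟨j, hj, hmmj⟩ := hM i
  by_cases h : m l ≤ mm i
  · rw [if_pos (le_trans hτ.2 h), if_pos h]
  · rw [if_neg h]
    have hjl : j < l := by
      by_contra hc
      exact h (hmmj ▸ m_mono m k hmono l j (by omega) hj)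
    have : mm i ≤ m (l - 1) := hmmj ▸ m_mono m k hmono j (l-1) (by omega) (by omega)
    rw [if_neg (by omega)]

lemma data_decomp {V : Type} (L k : ℕ) (f : V → ℤ) (m : ℕ → ℤ)
    (h0 : 0 ≤ m 0) (hL : m k ≤ (L:ℤ)) (hmono : ∀ l, l < k → m l < m (l + 1))
    (mm : V → ℤ) (hM : ∀ i, ∃ j ≤ k, mm i = m j) (i : V)
    (hfi : 0 ≤ f i ∧ f i ≤ (L:ℤ)) :
    |(f i : ℝ) - (mm i : ℝ)| =
      ((∑ τ ∈ Finset.Ioc 0 (m 0), (1 - chi (f i) τ))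
        + ∑ τ ∈ Finset.Ioc (m k) (L:ℤ), chi (f i) τ)
      + ∑ l ∈ Finset.Icc 1 k, ((m l : ℝ) - (m (l - 1) : ℝ))
          * |zData f m l i - bvec m mm l i| := by
  obtain ⟨j, hj, hmmj⟩ := hM i
  have hmm0 : m 0 ≤ mm i := hmmj ▸ m_mono m k hmono 0 j (by omega) hj
  have hmmk : mm i ≤ m k := hmmj ▸ m_mono m k hmono j k hj le_rfl
  rw [abs_eq_sum 0 L (f i) (mm i) hfi.1 hfi.2 (by omega) (by omega),
    ← sum_Ioc_consec_int _ (by omega : (0:ℤ) ≤ m 0) (by omega : m 0 ≤ (L:ℤ)),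
    ← sum_Ioc_consec_int _ (m_mono m k hmono 0 k (by omega) le_rfl) hL]
  have hS1 : ∑ τ ∈ Finset.Ioc 0 (m 0), |chi (f i) τ - chi (mm i) τ|
      = ∑ τ ∈ Finset.Ioc 0 (m 0), (1 - chi (f i) τ) := by
    apply Finset.sum_congr rfl
    intro τ hτ
    rw [Finset.mem_Ioc] at hτ
    rw [show chi (mm i) τ = 1 from if_pos (by omega)]
    rcases chi_bool (f i) τ with h | h <;> rw [h] <;> norm_num
  have hS3 : ∑ τ ∈ Finset.Ioc (m k) (L:ℤ), |chi (f i) τ - chi (mm i) τ|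
      = ∑ τ ∈ Finset.Ioc (m k) (L:ℤ), chi (f i) τ := by
    apply Finset.sum_congr rfl
    intro τ hτ
    rw [Finset.mem_Ioc] at hτ
    rw [show chi (mm i) τ = 0 from if_neg (by omega)]
    rcases chi_bool (f i) τ with h | h <;> rw [h] <;> norm_num
  have hS2 : ∑ τ ∈ Finset.Ioc (m 0) (m k), |chi (f i) τ - chi (mm i) τ|
      = ∑ l ∈ Finset.Icc 1 k, ((m l : ℝ) - (m (l - 1) : ℝ))
          * |zData f m l i - bvec m mm l i| := by
    rw [← block_split m k hmono (fun τ => |chi (f i) τ - chi (mm i) τ|)]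
    apply Finset.sum_congr rfl
    intro l hl
    rw [Finset.mem_Icc] at hl
    have hstep : m (l - 1) < m l := by
      have := m_smono m k hmono (l-1) l (by omega) (by omega)
      exact this
    rw [Finset.sum_congr rfl (fun τ hτ => by
      rw [chi_eq_bvec m k hmono mm hM i l hl.1 hl.2 τ hτ])]
    exact block_data f m l i hstep (bvec m mm l i) (bvec_bool' m mm l i)
  rw [hS1, hS2, hS3]
  ring

lemma pair_decomp {V : Type} (k : ℕ) (m : ℕ → ℤ)
    (hmono : ∀ l, l < k → m l < m (l + 1))
    (mm : V → ℤ) (hM : ∀ i, ∃ j ≤ k, mm i = m j) (i j : V) :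
    |(mm i : ℝ) - (mm j : ℝ)| =
      ∑ l ∈ Finset.Icc 1 k, ((m l : ℝ) - (m (l - 1) : ℝ))
        * |bvec m mm l i - bvec m mm l j| := by
  obtain ⟨ji, hji, hi⟩ := hM i
  obtain ⟨jj, hjj, hjV⟩ := hM j
  rw [abs_eq_sum (m 0) (m k) (mm i) (mm j)
    (hi ▸ m_mono m k hmono 0 ji (by omega) hji) (hi ▸ m_mono m k hmono ji k hji le_rfl)
    (hjV ▸ m_mono m k hmono 0 jj (by omega) hjj) (hjV ▸ m_mono m k hmono jj k hjj le_rfl),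
    ← block_split m k hmono (fun τ => |chi (mm i) τ - chi (mm j) τ|)]
  apply Finset.sum_congr rfl
  intro l hl
  rw [Finset.mem_Icc] at hl
  have hstep : m (l - 1) < m l := m_smono m k hmono (l-1) l (by omega) (by omega)
  rw [Finset.sum_congr rfl (fun τ hτ => by
    rw [chi_eq_bvec m k hmono mm hM i l hl.1 hl.2 τ hτ,
      chi_eq_bvec m k hmono mm hM j l hl.1 hl.2 τ hτ]),
    Finset.sum_const, nsmul_eq_mul, card_Ioc_real _ _ (le_of_lt hstep)]

lemma sum_rearrange {V : Type} [Fintype V] (k : ℕ) (lam : V → ℝ) (c : V → ℝ)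
    (beta : V → V → ℝ) (Δ : ℕ → ℝ) (d : V → ℕ → ℝ) (e : V → V → ℕ → ℝ) :
    ∑ i, lam i * (c i + ∑ l ∈ Finset.Icc 1 k, Δ l * d i l)
      + ∑ i, ∑ j, beta i j * (∑ l ∈ Finset.Icc 1 k, Δ l * e i j l)
    = ∑ i, lam i * c i
      + ∑ l ∈ Finset.Icc 1 k,
          Δ l * ((∑ i, lam i * d i l) + ∑ i, ∑ j, beta i j * e i j l) := by
  simp only [mul_add, Finset.mul_sum, Finset.sum_add_distrib]
  have e1 : ∑ i : V, ∑ l ∈ Finset.Icc 1 k, lam i * (Δ l * d i l)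
      = ∑ l ∈ Finset.Icc 1 k, ∑ i : V, Δ l * (lam i * d i l) := by
    rw [Finset.sum_comm]
    exact Finset.sum_congr rfl fun l _ => Finset.sum_congr rfl fun i _ => by ring
  have e2 : ∑ i : V, ∑ j : V, ∑ l ∈ Finset.Icc 1 k, beta i j * (Δ l * e i j l)
      = ∑ l ∈ Finset.Icc 1 k, ∑ i : V, ∑ j : V, Δ l * (beta i j * e i j l) := by
    rw [Finset.sum_congr rfl fun i (_ : i ∈ Finset.univ) =>
      (Finset.sum_comm (s := Finset.univ) (t := Finset.Icc 1 k)
        (f := fun j l => beta i j * (Δ l * e i j l))),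
      Finset.sum_comm]
    exact Finset.sum_congr rfl fun l _ => Finset.sum_congr rfl fun i _ =>
      Finset.sum_congr rfl fun j _ => by ring
  rw [e1, e2]
  ring

lemma core_decomp {V : Type} [Fintype V] (L k : ℕ) (f : V → ℤ)
    (hf : ∀ i, 0 ≤ f i ∧ f i ≤ (L : ℤ)) (lam : V → ℝ) (beta : V → V → ℝ)
    (m : ℕ → ℤ) (h0 : 0 ≤ m 0) (hL : m k ≤ (L : ℤ))
    (hmono : ∀ l, l < k → m l < m (l + 1))
    (mm : V → ℤ) (hM : ∀ i, ∃ j ≤ k, mm i = m j) :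
    U1R f lam beta (fun i => (mm i : ℝ))
      = (∑ i, lam i * ((∑ τ ∈ Finset.Ioc 0 (m 0), (1 - chi (f i) τ))
          + ∑ τ ∈ Finset.Ioc (m k) (L:ℤ), chi (f i) τ))
        + ∑ l ∈ Finset.Icc 1 k, ((m l : ℝ) - (m (l - 1) : ℝ))
            * uEn lam beta (zData f m l) (bvec m mm l) := by
  unfold U1R uEn
  rw [Finset.sum_congr rfl (fun i (_ : i ∈ Finset.univ) => by
    rw [data_decomp L k f m h0 hL hmono mm hM i (hf i)]),
    Finset.sum_congr rfl (fun i (_ : i ∈ Finset.univ) =>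
      Finset.sum_congr rfl (fun j (_ : j ∈ Finset.univ) => by
        rw [pair_decomp k m hmono mm hM i j]))]
  exact sum_rearrange k lam _ beta _ _ _

lemma downset_eq_Icc (k : ℕ) (S : Finset ℕ) (hsub : S ⊆ Finset.Icc 1 k)
    (hdown : ∀ a b, 1 ≤ a → a ≤ b → b ∈ S → a ∈ S) :
    S = Finset.Icc 1 S.card := by
  ext l
  simp only [Finset.mem_Icc]
  constructor
  · intro hl
    have h1 : 1 ≤ l := (Finset.mem_Icc.1 (hsub hl)).1
    refine ⟨h1, ?_⟩
    have hsub2 : Finset.Icc 1 l ⊆ S := fun a ha => by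
      rw [Finset.mem_Icc] at ha; exact hdown a l ha.1 ha.2 hl
    have := Finset.card_le_card hsub2
    rw [Nat.card_Icc] at this
    omega
  · rintro ⟨h1, h2⟩
    by_contra hl
    have hsub2 : S ⊆ Finset.Icc 1 (l - 1) := by
      intro b hb
      have hb' := Finset.mem_Icc.1 (hsub hb)
      rw [Finset.mem_Icc]
      refine ⟨hb'.1, ?_⟩
      by_contra hc
      exact hl (hdown l b h1 (by omega) hb)
    have := Finset.card_le_card hsub2
    rw [Nat.card_Icc] at this
    omega

/-- An ordered sequence of minimizers of the level energies u(l,·) yields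
a minimizer of the exponential energy U₁ over the label space M^V. -/
theorem stmt12 {V : Type} [Fintype V] (L k : ℕ) (f : V → ℤ)
    (hf : ∀ i, 0 ≤ f i ∧ f i ≤ (L : ℤ)) (lam : V → ℝ) (hlam : ∀ i, 0 ≤ lam i)
    (beta : V → V → ℝ) (hbeta : ∀ i j, 0 ≤ beta i j)
    (m : ℕ → ℤ) (h0 : 0 ≤ m 0) (hL : m k ≤ (L : ℤ))
    (hmono : ∀ l, l < k → m l < m (l + 1))
    (x : ℕ → V → ℝ)
    (hxmin : ∀ l, 1 ≤ l → l ≤ k → Minimizes lam beta (zData f m l) (x l))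
    (hxord : ∀ l l', 1 ≤ l → l ≤ l' → l' ≤ k → ∀ i, x l' i ≤ x l i) :
    (∀ i, ∃ j ≤ k,
      (m 0 : ℝ) + ∑ l ∈ Finset.Icc 1 k, ((m l : ℝ) - (m (l - 1) : ℝ)) * x l i = (m j : ℝ)) ∧
    ∀ mm : V → ℤ, (∀ i, ∃ j ≤ k, mm i = m j) →
      U1R f lam beta
        (fun i => (m 0 : ℝ) + ∑ l ∈ Finset.Icc 1 k, ((m l : ℝ) - (m (l - 1) : ℝ)) * x l i)
      ≤ U1R f lam beta (fun i => (mm i : ℝ)) := by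
  set S : V → Finset ℕ := fun i => (Finset.Icc 1 k).filter (fun l => x l i = 1) with hS
  set J : V → ℕ := fun i => (S i).card with hJ
  have hJk : ∀ i, J i ≤ k := by
    intro i
    have := Finset.card_le_card (Finset.filter_subset (fun l => x l i = 1) (Finset.Icc 1 k))
    rw [Nat.card_Icc] at this
    simpa [hJ, hS] using this
  have hSeq : ∀ i, S i = Finset.Icc 1 (J i) := by
    intro i
    apply downset_eq_Icc k (S i) (Finset.filter_subset _ _)
    intro a b ha hab hb
    rw [hS, Finset.mem_filter, Finset.mem_Icc] at hb ⊢
    refine ⟨⟨ha, by omega⟩, ?_⟩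
    have hord := hxord a b ha hab hb.1.2 i
    rw [hb.2] at hord
    rcases (hxmin a ha (by omega)).1 i with h | h
    · rw [h] at hord; linarith
    · exact h
  have hxiff : ∀ i l, 1 ≤ l → l ≤ k → (x l i = 1 ↔ l ≤ J i) := by
    intro i l h1 h2
    constructor
    · intro hx
      have : l ∈ S i := by rw [hS]; simp only [Finset.mem_filter, Finset.mem_Icc]; exact ⟨⟨h1, h2⟩, hx⟩
      rw [hSeq i, Finset.mem_Icc] at this; exact this.2
    · intro hle
      have : l ∈ S i := by rw [hSeq i, Finset.mem_Icc]; exact ⟨h1, hle⟩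
      rw [hS, Finset.mem_filter] at this; exact this.2
  have hx01 : ∀ i l, 1 ≤ l → l ≤ k → ¬ l ≤ J i → x l i = 0 := by
    intro i l h1 h2 hn
    rcases (hxmin l h1 h2).1 i with h | h
    · exact h
    · exact absurd ((hxiff i l h1 h2).1 h) hn
  have hhat : ∀ i,
      (m 0 : ℝ) + ∑ l ∈ Finset.Icc 1 k, ((m l : ℝ) - (m (l - 1) : ℝ)) * x l i
        = ((m (J i) : ℤ) : ℝ) := by
    intro i
    have h1 : ∑ l ∈ Finset.Icc 1 k, ((m l : ℝ) - (m (l - 1) : ℝ)) * x l i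
        = ∑ l ∈ Finset.Icc 1 k,
            (if l ≤ J i then ((m l : ℝ) - (m (l - 1) : ℝ)) else 0) := by
      apply Finset.sum_congr rfl
      intro l hl
      rw [Finset.mem_Icc] at hl
      by_cases hc : l ≤ J i
      · rw [if_pos hc, (hxiff i l hl.1 hl.2).2 hc, mul_one]
      · rw [if_neg hc, hx01 i l hl.1 hl.2 hc, mul_zero]
    have h2 : (Finset.Icc 1 k).filter (fun l => l ≤ J i) = Finset.Icc 1 (J i) := by
      ext l
      simp only [Finset.mem_filter, Finset.mem_Icc]
      have := hJk i
      omega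
    rw [h1, ← Finset.sum_filter, h2, telescope]
    push_cast; ring
  constructor
  · intro i
    exact ⟨J i, hJk i, hhat i⟩
  · intro mm hmm
    have key1 : (fun i => (m 0 : ℝ) + ∑ l ∈ Finset.Icc 1 k,
        ((m l : ℝ) - (m (l - 1) : ℝ)) * x l i) = (fun i => ((m (J i) : ℤ) : ℝ)) :=
      funext fun i => hhat i
    rw [key1,
      core_decomp L k f hf lam beta m h0 hL hmono (fun i => m (J i))
        (fun i => ⟨J i, hJk i, rfl⟩),
      core_decomp L k f hf lam beta m h0 hL hmono mm hmm]
    apply add_le_add_right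
    apply Finset.sum_le_sum
    intro l hl
    rw [Finset.mem_Icc] at hl
    have hstep : m (l - 1) < m l := m_smono m k hmono (l-1) l (by omega) (by omega)
    have hΔ : (0:ℝ) ≤ (m l : ℝ) - (m (l - 1) : ℝ) := by
      have : (m (l-1) : ℝ) < m l := by exact_mod_cast hstep
      linarith
    have hbx : bvec m (fun i => m (J i)) l = x l := by
      funext i
      unfold bvec
      by_cases hc : l ≤ J i
      · rw [if_pos (m_mono m k hmono l (J i) hc (hJk i)),
          (hxiff i l hl.1 hl.2).2 hc]
      · rw [if_neg (not_le.2 (m_smono m k hmono (J i) l (by omega) hl.2)),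
          hx01 i l hl.1 hl.2 hc]
    rw [hbx]
    exact mul_le_mul_of_nonneg_left
      ((hxmin l hl.1 hl.2).2 (bvec m mm l) (bvec_bool' m mm l)) hΔ
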